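/- The scalar curvature of the Siegel–Jacobi disk, s = Σ_{α,β} (h^{-1})_{β\bar{α}} Ric_{α\bar{β}}, is constant and equals -3/(2k) at every point. Explicitly, with metric matrix h = [[μ/P, μη/P],[μ\bar{η}/P, μ|η|²/P + 2k/P²]] and Ricci matrix Ric = [[0,0],[0, -3/P²]], one has trace(h^{-1} Ric) = -3/(2k). -/

import Mathlib

open Complex Matrix

lemma inv_trace_aux (a b c d e : ℂ) (hdet : a * d - b * c ≠ 0) :
    Matrix.trace ((!![a, b; c, d])⁻¹ * !![0, 0; 0, e]) = a * e / (a * d - b * c) := by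
  have h1 : (!![a, b; c, d]).det = a * d - b * c := by
    simp [Matrix.det_fin_two_of]
  rw [Matrix.inv_def, Matrix.adjugate_fin_two, h1, Ring.inverse_eq_inv']
  rw [Matrix.smul_mul, Matrix.trace_smul]
  simp [Matrix.trace_fin_two, Matrix.mul_apply, Fin.sum_univ_two]
  field_simp

/-- The scalar curvature of the Siegel–Jacobi disk is constant:
`trace (h⁻¹ * Ric) = -3/(2k)`, where `h` is the metric matrix and `Ric` the Ricci
matrix. -/
theorem siegelJacobi_scalar_curvature (k μ : ℝ) (hk : 0 < k) (hμ : 0 < μ)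
    (z w : ℂ) (hw : ‖w‖ < 1) :
    let P : ℂ := 1 - w * starRingEnd ℂ w
    let η : ℂ := (z + starRingEnd ℂ z * w) / P
    let ηb : ℂ := (starRingEnd ℂ z + z * starRingEnd ℂ w) / P
    let h : Matrix (Fin 2) (Fin 2) ℂ :=
      !![(μ : ℂ) / P, (μ : ℂ) * η / P;
         (μ : ℂ) * ηb / P, (μ : ℂ) * η * ηb / P + 2 * (k : ℂ) / P ^ 2]
    let Ric : Matrix (Fin 2) (Fin 2) ℂ :=
      !![0, 0; 0, -3 / P ^ 2]
    Matrix.trace (h⁻¹ * Ric) = -3 / (2 * (k : ℂ)) := by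
  intro P η ηb h Ric
  have hk' : (k : ℂ) ≠ 0 := by exact_mod_cast hk.ne'
  have hμ' : (μ : ℂ) ≠ 0 := by exact_mod_cast hμ.ne'
  have hP : P ≠ 0 := by
    have hsq : w * starRingEnd ℂ w = (Complex.normSq w : ℂ) := by
      rw [Complex.mul_conj]
    have hlt : Complex.normSq w < 1 := by
      have h1 : Complex.normSq w = ‖w‖ ^ 2 := by
        rw [Complex.normSq_eq_norm_sq]
      nlinarith [norm_nonneg w]
    show (1 : ℂ) - w * starRingEnd ℂ w ≠ 0
    rw [hsq]
    intro hc
    have h2 : (Complex.normSq w : ℂ) = 1 := by linear_combination -hc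
    have h3 : (Complex.normSq w : ℝ) = 1 := by exact_mod_cast h2
    linarith
  clear_value P η ηb
  have hdet : ((μ : ℂ) / P) * ((μ : ℂ) * η * ηb / P + 2 * (k : ℂ) / P ^ 2)
      - ((μ : ℂ) * η / P) * ((μ : ℂ) * ηb / P) = 2 * k * μ / P ^ 3 := by
    have h6 : P ^ 6 * P⁻¹ ^ 6 = 1 := by
      rw [← mul_pow, mul_inv_cancel₀ hP, one_pow]
    field_simp
    ring
  have hdet' : ((μ : ℂ) / P) * ((μ : ℂ) * η * ηb / P + 2 * (k : ℂ) / P ^ 2)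
      - ((μ : ℂ) * η / P) * ((μ : ℂ) * ηb / P) ≠ 0 := by
    rw [hdet]
    exact div_ne_zero (by simp [hk', hμ']) (pow_ne_zero _ hP)
  have := inv_trace_aux ((μ : ℂ) / P) ((μ : ℂ) * η / P) ((μ : ℂ) * ηb / P)
    ((μ : ℂ) * η * ηb / P + 2 * (k : ℂ) / P ^ 2) (-3 / P ^ 2) hdet'
  rw [show Matrix.trace (h⁻¹ * Ric) = _ from this, hdet]
  field_simp
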